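/- Let (X_i)_{i≥0} be an ℝ^d-valued causal function of an i.i.d. process (ξ_j)_{j∈ℤ}, let M_0 := σ(ξ_0, ξ_{−1}, ξ_{−2}, …), let α ∈ (0,1] and let f be a bounded α-Hölder function on ℝ^d with E f(X_0) = 0. Then for every i ≥ 1: E | f(X_0) · E( f(X_i) | M_0 ) | ≤ ‖f‖_{H_α}² (δ_{i,1})^α. -/

import Mathlib

open MeasureTheory ProbabilityTheory Filter Set
open scoped ENNReal NNReal

noncomputable section

/-- The causal process `X_i = G((ξ_{i-j})_{j ∈ ℕ})`. -/
def causalX {Ω 𝓧 E : Type*} (G : (ℕ → 𝓧) → E) (ξ : ℤ → Ω → 𝓧)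
    (i : ℕ) (ω : Ω) : E :=
  G (fun j => ξ ((i : ℤ) - (j : ℤ)) ω)

/-- The coupled process `Ẋ_i = G(ξ_i, …, ξ_1, ξ'_0, ξ'_{-1}, …)`. -/
def causalXdot {Ω 𝓧 E : Type*} (G : (ℕ → 𝓧) → E) (ξ ξ' : ℤ → Ω → 𝓧)
    (i : ℕ) (ω : Ω) : E :=
  G (fun j => if (j : ℤ) < (i : ℤ) then ξ ((i : ℤ) - (j : ℤ)) ω
              else ξ' ((i : ℤ) - (j : ℤ)) ω)

/-- The physical dependence measure `δ_{i,s} = ‖X_i - Ẋ_i‖_s ∈ [0,∞]`. -/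
def pdm {Ω 𝓧 : Type*} [MeasurableSpace Ω] {d : ℕ} (P : Measure Ω)
    (G : (ℕ → 𝓧) → (Fin d → ℝ)) (ξ ξ' : ℤ → Ω → 𝓧) (s : ℝ≥0∞) (i : ℕ) : ℝ≥0∞ :=
  eLpNorm (fun ω => causalX G ξ i ω - causalXdot G ξ ξ' i ω) s P

/-- The sup-norm `‖f‖_∞ = sup_x |f x|` (as a supremum of reals). -/
def supNorm {d : ℕ} (f : (Fin d → ℝ) → ℝ) : ℝ :=
  sSup {c : ℝ | ∃ x : Fin d → ℝ, c = |f x|}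

/-- The α-Hölder norm `‖f‖_{H_α}`. -/
def holderNorm {d : ℕ} (α : ℝ) (f : (Fin d → ℝ) → ℝ) : ℝ :=
  supNorm f + sSup {c : ℝ | ∃ x y : Fin d → ℝ, x ≠ y ∧ c = |f x - f y| / ‖x - y‖ ^ α}

/-- Membership in the class `H_α` of bounded α-Hölder functions. -/
def MemHolderCl {d : ℕ} (α : ℝ) (f : (Fin d → ℝ) → ℝ) : Prop :=
  (∃ M : ℝ, ∀ x, |f x| ≤ M) ∧
  ∃ C : ℝ, ∀ x y : Fin d → ℝ, |f x - f y| ≤ C * ‖x - y‖ ^ α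

section Aux

variable {Ω 𝓧 ι : Type*} [MeasurableSpace Ω] [m𝓧 : MeasurableSpace 𝓧]
  {P : Measure Ω} [IsProbabilityMeasure P]

set_option linter.unusedSectionVars false
lemma indep_prod_reindex (ζ : ι → Ω → 𝓧)
    (hindep : iIndepFun ζ P) {η : Type*} {k : η → ι}
    (hk : Function.Injective k) (S : Finset η) (sets : η → Set 𝓧)
    (hsets : ∀ j ∈ S, MeasurableSet (sets j)) :
    P (⋂ j ∈ S, ζ (k j) ⁻¹' sets j) = ∏ j ∈ S, P (ζ (k j) ⁻¹' sets j) := by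
  classical
  set sets' : ι → Set 𝓧 := Function.extend k sets (fun _ => Set.univ) with hsets'def
  have hext : ∀ j, sets' (k j) = sets j := fun j => hk.extend_apply _ _ _
  have h1 : (⋂ j ∈ S, ζ (k j) ⁻¹' sets j) = ⋂ i ∈ S.image k, ζ i ⁻¹' sets' i := by
    rw [Finset.set_biInter_finset_image]
    exact Set.iInter₂_congr fun j _ => by rw [hext]
  have h2 : ∀ i ∈ S.image k, MeasurableSet (sets' i) := by
    intro i hi
    obtain ⟨j, hj, rfl⟩ := Finset.mem_image.mp hi
    rw [hext]; exact hsets j hj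
  rw [h1, hindep.measure_inter_preimage_eq_mul (S.image k) h2,
    Finset.prod_image (fun a _ b _ h => hk h)]
  exact Finset.prod_congr rfl fun j _ => by rw [hext]

lemma map_pi_family (ζ : ι → Ω → 𝓧) (hmeas : ∀ i, Measurable (ζ i))
    (hindep : iIndepFun ζ P) (i₀ : ι)
    (hident : ∀ i, Measure.map (ζ i) P = Measure.map (ζ i₀) P)
    {η : Type*} [Fintype η] {k : η → ι} (hk : Function.Injective k) :
    Measure.map (fun ω (j : η) => ζ (k j) ω) P
      = Measure.pi (fun _ : η => Measure.map (ζ i₀) P) := by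
  haveI : IsProbabilityMeasure (Measure.map (ζ i₀) P) :=
    Measure.isProbabilityMeasure_map (hmeas i₀).aemeasurable
  have hΦ : Measurable (fun ω (j : η) => ζ (k j) ω) :=
    measurable_pi_lambda _ fun j => hmeas _
  refine (Measure.pi_eq fun t ht => ?_).symm
  rw [Measure.map_apply hΦ (MeasurableSet.univ_pi ht)]
  have hpre : (fun ω (j : η) => ζ (k j) ω) ⁻¹' (Set.pi Set.univ t)
      = ⋂ j ∈ Finset.univ, ζ (k j) ⁻¹' t j := by
    ext ω; simp [Set.mem_univ_pi]
  rw [hpre, indep_prod_reindex ζ hindep hk Finset.univ t (fun j _ => ht j)]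
  refine Finset.prod_congr rfl fun j _ => ?_
  rw [← Measure.map_apply (hmeas _) (ht j), hident (k j)]

lemma map_seq_eq (ζ : ι → Ω → 𝓧) (hmeas : ∀ i, Measurable (ζ i))
    (hindep : iIndepFun ζ P) (i₀ : ι)
    (hident : ∀ i, Measure.map (ζ i) P = Measure.map (ζ i₀) P)
    {k l : ℕ → ι} (hk : Function.Injective k) (hl : Function.Injective l) :
    Measure.map (fun ω (j : ℕ) => ζ (k j) ω) P
      = Measure.map (fun ω (j : ℕ) => ζ (l j) ω) P := by
  have hΦk : Measurable (fun ω (j : ℕ) => ζ (k j) ω) :=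
    measurable_pi_lambda _ fun j => hmeas _
  have hΦl : Measurable (fun ω (j : ℕ) => ζ (l j) ω) :=
    measurable_pi_lambda _ fun j => hmeas _
  haveI : IsProbabilityMeasure (Measure.map (fun ω (j : ℕ) => ζ (k j) ω) P) :=
    Measure.isProbabilityMeasure_map hΦk.aemeasurable
  haveI : IsProbabilityMeasure (Measure.map (fun ω (j : ℕ) => ζ (l j) ω) P) :=
    Measure.isProbabilityMeasure_map hΦl.aemeasurable
  refine ext_of_generate_finite (measurableCylinders (fun _ : ℕ => 𝓧))
    generateFrom_measurableCylinders.symm isPiSystem_measurableCylinders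
    (fun s hs => ?_) (by simp)
  obtain ⟨t, S, hS, rfl⟩ := (mem_measurableCylinders _).mp hs
  rw [Measure.map_apply hΦk hS.cylinder, Measure.map_apply hΦl hS.cylinder]
  have hprek : (fun ω (j : ℕ) => ζ (k j) ω) ⁻¹' cylinder t S
      = (fun ω (j : t) => ζ (k (j : ℕ)) ω) ⁻¹' S := rfl
  have hprel : (fun ω (j : ℕ) => ζ (l j) ω) ⁻¹' cylinder t S
      = (fun ω (j : t) => ζ (l (j : ℕ)) ω) ⁻¹' S := rfl
  have hmk : Measurable (fun ω (j : t) => ζ (k (j : ℕ)) ω) :=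
    measurable_pi_lambda _ fun j => hmeas _
  have hml : Measurable (fun ω (j : t) => ζ (l (j : ℕ)) ω) :=
    measurable_pi_lambda _ fun j => hmeas _
  rw [hprek, hprel, ← Measure.map_apply hmk hS, ← Measure.map_apply hml hS,
    map_pi_family ζ hmeas hindep i₀ hident
      (fun a b h => Subtype.val_injective (hk h) : Function.Injective fun j : t => k (j : ℕ)),
    map_pi_family ζ hmeas hindep i₀ hident
      (fun a b h => Subtype.val_injective (hl h) : Function.Injective fun j : t => l (j : ℕ))]

end Aux

/-- key estimate in the proof of Proposition 3 of the paper: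
for a causal function of an i.i.d. process and `f ∈ H_α` centered,
`E |f(X_0) E(f(X_i)|M_0)| ≤ ‖f‖_{H_α}² δ_{i,1}^α`, where `M_0 = σ(ξ_0, ξ_{-1}, …)`. -/
theorem stmt16 {Ω 𝓧 : Type*} [mΩ : MeasurableSpace Ω]
    [NormedAddCommGroup 𝓧] [NormedSpace ℝ 𝓧] [CompleteSpace 𝓧]
    [m𝓧 : MeasurableSpace 𝓧] [BorelSpace 𝓧] {d : ℕ}
    (P : Measure Ω) [IsProbabilityMeasure P]
    (ζ : ℤ × Bool → Ω → 𝓧) (hζmeas : ∀ jb, Measurable (ζ jb))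
    (hζindep : iIndepFun ζ P)
    (hζident : ∀ jb, Measure.map (ζ jb) P = Measure.map (ζ (0, false)) P)
    (G : (ℕ → 𝓧) → (Fin d → ℝ)) (hG : Measurable G)
    (α : ℝ) (hα : 0 < α) (hα1 : α ≤ 1)
    (f : (Fin d → ℝ) → ℝ) (hf : MemHolderCl α f)
    (hf0 : (∫ ω, f (causalX G (fun j => ζ (j, false)) 0 ω) ∂P) = 0) :
    ∀ i : ℕ, 1 ≤ i →
      ENNReal.ofReal (∫ ω, |f (causalX G (fun j => ζ (j, false)) 0 ω) *
          MeasureTheory.condExp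
            (⨆ j : {j : ℤ // j ≤ 0}, MeasurableSpace.comap (ζ ((j : ℤ), false)) m𝓧)
            P (fun ω' => f (causalX G (fun j => ζ (j, false)) i ω')) ω| ∂P) ≤
        ENNReal.ofReal (holderNorm α f ^ 2) *
          pdm P G (fun j => ζ (j, false)) (fun j => ζ (j, true)) 1 i ^ α := by
  classical
  set ξ : ℤ → Ω → 𝓧 := fun j => ζ (j, false) with hξdef
  set ξ' : ℤ → Ω → 𝓧 := fun j => ζ (j, true) with hξ'def
  set H : ℝ := holderNorm α f with hHdef
  obtain ⟨⟨Mb, hMb⟩, ⟨Cb, hCb⟩⟩ := hf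
  set Q : Set ℝ := {c : ℝ | ∃ x y : Fin d → ℝ, x ≠ y ∧ c = |f x - f y| / ‖x - y‖ ^ α}
    with hQdef
  set C₀ : ℝ := sSup Q with hC₀def
  set Sn : ℝ := supNorm f with hSndef
  have hHsum : H = Sn + C₀ := rfl
  have hQbdd : BddAbove Q := by
    refine ⟨max Cb 0, ?_⟩
    rintro c ⟨x, y, hxy, rfl⟩
    have hpos : (0:ℝ) < ‖x - y‖ ^ α :=
      Real.rpow_pos_of_pos (norm_pos_iff.mpr (sub_ne_zero.mpr hxy)) α
    rw [div_le_iff₀ hpos]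
    calc |f x - f y| ≤ Cb * ‖x - y‖ ^ α := hCb x y
      _ ≤ max Cb 0 * ‖x - y‖ ^ α :=
          mul_le_mul_of_nonneg_right (le_max_left _ _) hpos.le
  have hC₀0 : 0 ≤ C₀ := Real.sSup_nonneg (by rintro c ⟨x, y, hxy, rfl⟩; positivity)
  have hSnle : ∀ x, |f x| ≤ Sn := fun x =>
    le_csSup ⟨Mb, by rintro c ⟨x, rfl⟩; exact hMb x⟩ ⟨x, rfl⟩
  have hSn0 : 0 ≤ Sn := le_trans (abs_nonneg _) (hSnle 0)
  have hHSn : Sn ≤ H := by rw [hHsum]; linarith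
  have hHC₀ : C₀ ≤ H := by rw [hHsum]; linarith
  have hH0 : 0 ≤ H := by rw [hHsum]; linarith
  have hC₀le : ∀ x y, |f x - f y| ≤ C₀ * ‖x - y‖ ^ α := by
    intro x y
    rcases eq_or_ne x y with rfl | hxy
    · simp [Real.zero_rpow hα.ne']
    · have hpos : (0:ℝ) < ‖x - y‖ ^ α :=
        Real.rpow_pos_of_pos (norm_pos_iff.mpr (sub_ne_zero.mpr hxy)) α
      have hq : |f x - f y| / ‖x - y‖ ^ α ≤ C₀ := le_csSup hQbdd ⟨x, y, hxy, rfl⟩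
      calc |f x - f y| = |f x - f y| / ‖x - y‖ ^ α * ‖x - y‖ ^ α := by
            field_simp
        _ ≤ C₀ * ‖x - y‖ ^ α := mul_le_mul_of_nonneg_right hq hpos.le
  have hfc : Continuous f := by
    have hHw : HolderWith C₀.toNNReal α.toNNReal f := by
      intro x y
      rw [edist_dist, edist_dist, Real.dist_eq, dist_eq_norm]
      calc ENNReal.ofReal |f x - f y| ≤ ENNReal.ofReal (C₀ * ‖x - y‖ ^ α) :=
            ENNReal.ofReal_le_ofReal (hC₀le x y)
        _ = ↑C₀.toNNReal * ENNReal.ofReal ‖x - y‖ ^ (α.toNNReal : ℝ) := by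
            rw [ENNReal.ofReal_mul hC₀0,
              ← ENNReal.ofReal_rpow_of_nonneg (norm_nonneg _) hα.le,
              Real.coe_toNNReal α hα.le]
            rfl
    exact hHw.continuous (Real.toNNReal_pos.mpr hα)
  have hfm : Measurable f := hfc.measurable
  have hXmeas : ∀ n : ℕ, Measurable (causalX G ξ n) := fun n =>
    hG.comp (measurable_pi_lambda _ fun j => hζmeas _)
  intro i _hi
  have hXdmeas : Measurable (causalXdot G ξ ξ' i) := by
    refine hG.comp (measurable_pi_lambda _ fun j => ?_)
    by_cases h : (j : ℤ) < (i : ℤ) <;> simp only [h, if_true, if_false] <;>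
      exact hζmeas _
  have hInt : ∀ (Y : Ω → Fin d → ℝ), Measurable Y →
      Integrable (fun ω => f (Y ω)) P := by
    intro Y hY
    refine (integrable_const Sn).mono' ((hfm.comp hY).aestronglyMeasurable) ?_
    exact ae_of_all _ fun ω => by rw [Real.norm_eq_abs]; exact hSnle _
  have hfG : Measurable fun x : ℕ → 𝓧 => f (G x) := hfm.comp hG
  have hint_eq : ∀ (k l : ℕ → ℤ × Bool), Function.Injective k → Function.Injective l →
      ∫ ω, f (G (fun j => ζ (k j) ω)) ∂P = ∫ ω, f (G (fun j => ζ (l j) ω)) ∂P := by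
    intro k l hk hl
    have hΦk : Measurable (fun ω (j : ℕ) => ζ (k j) ω) :=
      measurable_pi_lambda _ fun j => hζmeas _
    have hΦl : Measurable (fun ω (j : ℕ) => ζ (l j) ω) :=
      measurable_pi_lambda _ fun j => hζmeas _
    calc ∫ ω, f (G (fun j => ζ (k j) ω)) ∂P
        = ∫ y, f (G y) ∂(Measure.map (fun ω (j : ℕ) => ζ (k j) ω) P) :=
          (integral_map hΦk.aemeasurable hfG.aestronglyMeasurable).symm
      _ = ∫ y, f (G y) ∂(Measure.map (fun ω (j : ℕ) => ζ (l j) ω) P) := by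
          rw [map_seq_eq ζ hζmeas hζindep (0, false) hζident hk hl]
      _ = ∫ ω, f (G (fun j => ζ (l j) ω)) ∂P :=
          integral_map hΦl.aemeasurable hfG.aestronglyMeasurable
  -- the law of Ẋ_i equals the law of X_0, hence E f(Ẋ_i) = 0
  have hli : Function.Injective (fun j : ℕ =>
      if (j : ℤ) < (i : ℤ) then ((i : ℤ) - (j : ℤ), false) else ((i : ℤ) - (j : ℤ), true)) := by
    intro a b h
    by_cases ha : (a : ℤ) < (i : ℤ) <;> by_cases hb : (b : ℤ) < (i : ℤ) <;>
      simp only [ha, hb, if_true, if_false, Prod.mk.injEq] at h <;> omega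
  have hk0 : Function.Injective (fun j : ℕ => ((0 : ℤ) - (j : ℤ), false)) := by
    intro a b h
    simp only [Prod.mk.injEq] at h
    omega
  have hfunXd : causalXdot G ξ ξ' i = fun ω => G (fun j =>
      ζ (if (j : ℤ) < (i : ℤ) then ((i : ℤ) - (j : ℤ), false)
        else ((i : ℤ) - (j : ℤ), true)) ω) := by
    funext ω
    have harg : (fun j : ℕ => if (j : ℤ) < (i : ℤ) then ξ ((i : ℤ) - (j : ℤ)) ω
        else ξ' ((i : ℤ) - (j : ℤ)) ω)
        = fun j : ℕ => ζ (if (j : ℤ) < (i : ℤ) then ((i : ℤ) - (j : ℤ), false)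
            else ((i : ℤ) - (j : ℤ), true)) ω := by
      funext j
      by_cases h : (j : ℤ) < (i : ℤ) <;> simp only [h, if_true, if_false] <;> rfl
    exact congrArg G harg
  have hEXd0 : ∫ ω, f (causalXdot G ξ ξ' i ω) ∂P = 0 := by
    have h2 := hint_eq _ _ hli hk0
    have h1 : ∫ ω, f (causalXdot G ξ ξ' i ω) ∂P = ∫ ω, f (causalX G ξ 0 ω) ∂P := by
      rw [hfunXd]; exact h2
    exact h1.trans hf0
  set g : Ω → ℝ := fun ω => f (causalX G ξ i ω) - f (causalXdot G ξ ξ' i ω) with hgdef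
  have hintXi : Integrable (fun ω => f (causalX G ξ i ω)) P := hInt _ (hXmeas i)
  have hintXd : Integrable (fun ω => f (causalXdot G ξ ξ' i ω)) P := hInt _ hXdmeas
  have hintg : Integrable g P := hintXi.sub hintXd
  set D : Ω → Fin d → ℝ := fun ω => causalX G ξ i ω - causalXdot G ξ ξ' i ω with hDdef
  have hDmeas : Measurable D := (hXmeas i).sub hXdmeas
  have hgD : ∀ ω, |g ω| ≤ C₀ * ‖D ω‖ ^ α := fun ω => hC₀le _ _
  set M : MeasurableSpace Ω :=
    (⨆ j : {j : ℤ // j ≤ 0}, MeasurableSpace.comap (ζ ((j : ℤ), false)) m𝓧) with hMdef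
  -- conditional expectation manipulations
  have hle : M ≤ mΩ := by
    rw [hMdef]
    exact iSup_le fun j => measurable_iff_comap_le.mp (hζmeas _)
  haveI hsf : SigmaFinite (P.trim hle) := inferInstance
  set S₁ : Set (ℤ × Bool) := {p | p.2 = true ∨ 1 ≤ p.1} with hS₁def
  set S₂ : Set (ℤ × Bool) := {p | p.2 = false ∧ p.1 ≤ 0} with hS₂def
  have hdisj : Disjoint S₁ S₂ := by
    refine Set.disjoint_left.mpr ?_
    rintro ⟨a, b⟩ h1 h2
    simp only [hS₁def, hS₂def, Set.mem_setOf_eq] at h1 h2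
    rcases h1 with h | h
    · rw [h2.1] at h; exact Bool.false_ne_true h
    · omega
  set m₁ : MeasurableSpace Ω := ⨆ p ∈ S₁, MeasurableSpace.comap (ζ p) m𝓧 with hm₁def
  have hle₁ : m₁ ≤ mΩ := iSup₂_le fun p _ => measurable_iff_comap_le.mp (hζmeas p)
  have hMS₂ : M = ⨆ p ∈ S₂, MeasurableSpace.comap (ζ p) m𝓧 := by
    apply le_antisymm
    · refine iSup_le fun j => ?_
      have hmem : ((j : ℤ), false) ∈ S₂ := ⟨rfl, j.2⟩
      exact le_biSup (fun p => MeasurableSpace.comap (ζ p) m𝓧) hmem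
    · refine iSup₂_le fun p hp => ?_
      obtain ⟨h1, h2⟩ := hp
      have hpe : p = ((p.1 : ℤ), false) := Prod.ext rfl h1
      rw [hpe]
      exact le_iSup (fun j : {j : ℤ // j ≤ 0} =>
        MeasurableSpace.comap (ζ ((j : ℤ), false)) m𝓧) ⟨p.1, h2⟩
  have hindep₁₂ : Indep m₁ M P := by
    rw [hMS₂]
    exact indep_iSup_of_disjoint (fun p => measurable_iff_comap_le.mp (hζmeas p))
      hζindep hdisj
  have hXd₁ : Measurable[m₁] (causalXdot G ξ ξ' i) := by
    refine hG.comp (measurable_pi_lambda _ fun j => ?_)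
    by_cases h : (j : ℤ) < (i : ℤ)
    · simp only [h, if_true]
      have hp : ((i : ℤ) - (j : ℤ), false) ∈ S₁ := Or.inr (by omega)
      exact measurable_iff_comap_le.mpr
        (le_biSup (fun p => MeasurableSpace.comap (ζ p) m𝓧) hp)
    · simp only [h, if_false]
      have hp : ((i : ℤ) - (j : ℤ), true) ∈ S₁ := Or.inl rfl
      exact measurable_iff_comap_le.mpr
        (le_biSup (fun p => MeasurableSpace.comap (ζ p) m𝓧) hp)
  have hsmXd : StronglyMeasurable[m₁] (fun ω => f (causalXdot G ξ ξ' i ω)) :=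
    (hfm.comp hXd₁).stronglyMeasurable
  have hcondXd : P[(fun ω => f (causalXdot G ξ ξ' i ω))|M] =ᵐ[P] fun _ => 0 := by
    have h := condExp_indep_eq hle₁ hle hsmXd hindep₁₂
    rw [hEXd0] at h
    exact h
  have hcond_eq : P[(fun ω => f (causalX G ξ i ω))|M] =ᵐ[P] P[g|M] := by
    have hsplit : (fun ω => f (causalX G ξ i ω))
        = g + fun ω => f (causalXdot G ξ ξ' i ω) := by
      funext ω; simp [hgdef]
    calc P[(fun ω => f (causalX G ξ i ω))|M]
        =ᵐ[P] P[g|M] + P[(fun ω => f (causalXdot G ξ ξ' i ω))|M] := by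
          rw [hsplit]; exact condExp_add hintg hintXd M
      _ =ᵐ[P] P[g|M] := by
          filter_upwards [hcondXd] with ω h
          simp [h]
  -- pointwise bound through conditional expectations
  have habs : ∀ᵐ ω ∂P, |(P[g|M]) ω| ≤ (P[(fun ω => |g ω|)|M]) ω := by
    filter_upwards [condExp_mono hintg hintg.abs
        (ae_of_all _ fun ω => le_abs_self (g ω)),
      EventuallyLE.trans (condExp_neg g M).symm.le
        (condExp_mono hintg.neg hintg.abs
          (ae_of_all _ fun ω => neg_le_abs (g ω)))] with ω h1 h2
    exact abs_le.mpr ⟨neg_le.mp h2, h1⟩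
  have hbound : ∀ᵐ ω ∂P, |f (causalX G ξ 0 ω) * (P[g|M]) ω|
      ≤ Sn * (P[(fun ω => |g ω|)|M]) ω := by
    filter_upwards [habs] with ω h
    rw [abs_mul]
    exact mul_le_mul (hSnle _) h (abs_nonneg _) hSn0
  have hintc : Integrable (fun ω => |f (causalX G ξ 0 ω) * (P[g|M]) ω|) P := by
    refine Integrable.abs ?_
    exact integrable_condExp.bdd_mul ((hfm.comp (hXmeas 0)).aestronglyMeasurable) (c := Sn)
      (ae_of_all _ fun ω => by rw [Real.norm_eq_abs]; exact hSnle _)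
  have hA2 : ∫ ω, |f (causalX G ξ 0 ω) * (P[g|M]) ω| ∂P ≤ Sn * ∫ ω, |g ω| ∂P := by
    calc ∫ ω, |f (causalX G ξ 0 ω) * (P[g|M]) ω| ∂P
        ≤ ∫ ω, Sn * (P[(fun ω => |g ω|)|M]) ω ∂P :=
          integral_mono_ae hintc (integrable_condExp.const_mul Sn) hbound
      _ = Sn * ∫ ω, (P[(fun ω => |g ω|)|M]) ω ∂P := integral_const_mul Sn _
      _ = Sn * ∫ ω, |g ω| ∂P := by rw [integral_condExp hle]
  have hA1 : ∫ ω, |f (causalX G ξ 0 ω) * (P[(fun ω' => f (causalX G ξ i ω'))|M]) ω| ∂P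
      = ∫ ω, |f (causalX G ξ 0 ω) * (P[g|M]) ω| ∂P := by
    refine integral_congr_ae ?_
    filter_upwards [hcond_eq] with ω h
    rw [h]
  -- the Hölder/Jensen estimate on E|g|
  have hsnorm_eq : eLpNorm D (ENNReal.ofReal α) P ^ α
      = ∫⁻ ω, (‖D ω‖₊ : ℝ≥0∞) ^ α ∂P := by
    rw [eLpNorm_eq_lintegral_rpow_enorm_toReal (ENNReal.ofReal_pos.mpr hα).ne'
        ENNReal.ofReal_ne_top, ENNReal.toReal_ofReal hα.le,
      ← ENNReal.rpow_mul, one_div, inv_mul_cancel₀ hα.ne', ENNReal.rpow_one]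
    rfl
  have hexp_le : ENNReal.ofReal α ≤ 1 := by
    simpa [ENNReal.ofReal_one] using ENNReal.ofReal_le_ofReal hα1
  have h3 : ENNReal.ofReal (∫ ω, |g ω| ∂P)
      ≤ ENNReal.ofReal C₀ * eLpNorm D 1 P ^ α := by
    rw [ofReal_integral_eq_lintegral_ofReal hintg.abs (ae_of_all _ fun ω => abs_nonneg _)]
    calc ∫⁻ ω, ENNReal.ofReal |g ω| ∂P
        ≤ ∫⁻ ω, ENNReal.ofReal C₀ * (‖D ω‖₊ : ℝ≥0∞) ^ α ∂P := by
          refine lintegral_mono fun ω => ?_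
          calc ENNReal.ofReal |g ω| ≤ ENNReal.ofReal (C₀ * ‖D ω‖ ^ α) :=
                ENNReal.ofReal_le_ofReal (hgD ω)
            _ = ENNReal.ofReal C₀ * (‖D ω‖₊ : ℝ≥0∞) ^ α := by
                rw [ENNReal.ofReal_mul hC₀0,
                  ← ENNReal.ofReal_rpow_of_nonneg (norm_nonneg _) hα.le,
                  ofReal_norm_eq_enorm, enorm_eq_nnnorm]
      _ = ENNReal.ofReal C₀ * ∫⁻ ω, (‖D ω‖₊ : ℝ≥0∞) ^ α ∂P :=
          lintegral_const_mul' _ _ ENNReal.ofReal_ne_top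
      _ = ENNReal.ofReal C₀ * eLpNorm D (ENNReal.ofReal α) P ^ α := by
          rw [hsnorm_eq]
      _ ≤ ENNReal.ofReal C₀ * eLpNorm D 1 P ^ α := by
          refine mul_le_mul_right (ENNReal.rpow_le_rpow ?_ hα.le) _
          exact eLpNorm_le_eLpNorm_of_exponent_le hexp_le hDmeas.aestronglyMeasurable
  have hpdm : @pdm Ω 𝓧 mΩ d P G ξ ξ' 1 i = eLpNorm D 1 P := rfl
  calc ENNReal.ofReal (∫ ω, |f (causalX G ξ 0 ω)
          * (P[(fun ω' => f (causalX G ξ i ω'))|M]) ω| ∂P)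
      = ENNReal.ofReal (∫ ω, |f (causalX G ξ 0 ω) * (P[g|M]) ω| ∂P) := by rw [hA1]
    _ ≤ ENNReal.ofReal (Sn * ∫ ω, |g ω| ∂P) := ENNReal.ofReal_le_ofReal hA2
    _ = ENNReal.ofReal Sn * ENNReal.ofReal (∫ ω, |g ω| ∂P) := ENNReal.ofReal_mul hSn0
    _ ≤ ENNReal.ofReal Sn * (ENNReal.ofReal C₀ * eLpNorm D 1 P ^ α) :=
        mul_le_mul_right h3 _
    _ ≤ ENNReal.ofReal H * (ENNReal.ofReal H * eLpNorm D 1 P ^ α) :=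
        mul_le_mul' (ENNReal.ofReal_le_ofReal hHSn)
          (mul_le_mul_left (ENNReal.ofReal_le_ofReal hHC₀) _)
    _ = ENNReal.ofReal (H ^ 2) * @pdm Ω 𝓧 mΩ d P G ξ ξ' 1 i ^ α := by
        rw [hpdm, pow_two, ENNReal.ofReal_mul hH0, mul_assoc]

end
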